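/- Let k be a field, Γ a linearly ordered abelian group, and γ ∈ Γ with γ > 0. Then for every a ∈ k((t^Γ)) and every y ∈ k: res( a · (1 − single γ y)⁻¹ ) = Σ_{n ∈ ℕ} a.coeff(−n·γ) · yⁿ, where the sum has only finitely many nonzero terms (a finitely supported sum over ℕ). Here res(z) = z.coeff 0, and single γ y is the series y·t^γ, so that a·(1 − single γ y)⁻¹ is a/(1 − t^γ y). -/

import Mathlib

/-- For any Hahn series `c` and `γ > 0`, only finitely many `n : ℕ` satisfy
`c.coeff (-(n • γ)) ≠ 0`. -/
lemma aux_finite {k : Type*} [Field k] {Γ : Type*} [AddCommGroup Γ] [LinearOrder Γ] [IsOrderedAddMonoid Γ]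
    (γ : Γ) (hγ : 0 < γ) (c : HahnSeries Γ k) :
    {n : ℕ | c.coeff (-(n • γ)) ≠ 0}.Finite := by
  by_contra hinf

  have hinf2 : Set.Infinite {n : ℕ | c.coeff (-(n • γ)) ≠ 0} := hinf
  have hmem : ∀ n, (fun m => c.coeff (-(m • γ)) ≠ 0) (Nat.nth _ n) :=
    Nat.nth_mem_of_infinite hinf2
  have hmono : StrictMono (Nat.nth (fun m => c.coeff (-(m • γ)) ≠ 0)) :=
    Nat.nth_strictMono hinf2
  have hanti : StrictAnti (fun n : ℕ => -((Nat.nth (fun m => c.coeff (-(m • γ)) ≠ 0) n) • γ)) := by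
    intro i j hij
    simp only
    rw [neg_lt_neg_iff]
    exact nsmul_lt_nsmul_left hγ (hmono hij)
  exact (Set.isWF_iff_no_descending_seq.mp c.isWF_support) _ hanti (fun n => hmem n)

theorem stmt_8 {k : Type*} [Field k] {Γ : Type*} [AddCommGroup Γ] [LinearOrder Γ] [IsOrderedAddMonoid Γ]
    (γ : Γ) (hγ : 0 < γ) (a : HahnSeries Γ k) (y : k) :
    {n : ℕ | a.coeff (-(n • γ)) * y ^ n ≠ 0}.Finite ∧
      (a * (1 - HahnSeries.single γ y)⁻¹).coeff 0 = ∑ᶠ n : ℕ, a.coeff (-(n • γ)) * y ^ n := by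
  have hSa := aux_finite γ hγ a
  constructor
  · exact hSa.subset (fun n hn => by
      simp only [Set.mem_setOf_eq] at hn ⊢
      exact fun h => hn (by rw [h, zero_mul]))
  -- Let b = a * (1 - single γ y)⁻¹
  set u : HahnSeries Γ k := 1 - HahnSeries.single γ y with hu
  have hu0 : u ≠ 0 := by
    intro h
    have : u.coeff 0 = 0 := by rw [h]; simp
    rw [hu] at this
    simp only [HahnSeries.coeff_sub, HahnSeries.coeff_one, if_pos rfl,
      HahnSeries.coeff_single_of_ne hγ.ne'.symm] at this
    norm_num at this
  set b : HahnSeries Γ k := a * u⁻¹ with hb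
  have hba : b * u = a := by rw [hb, mul_assoc, inv_mul_cancel₀ hu0, mul_one]
  -- recursion: b.coeff q = a.coeff q + b.coeff (q - γ) * y
  have hrec : ∀ q : Γ, b.coeff q = a.coeff q + b.coeff (q - γ) * y := by
    intro q
    have h1 : a.coeff q = b.coeff q - (b * HahnSeries.single γ y).coeff q := by
      rw [← hba, hu]
      rw [mul_sub, mul_one, HahnSeries.coeff_sub]
    have h2 : (b * HahnSeries.single γ y).coeff q = b.coeff (q - γ) * y := by
      have := HahnSeries.coeff_mul_single_add (r := y) (x := b) (a := q - γ) (b := γ)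
      rwa [sub_add_cancel] at this
    rw [h2] at h1
    linear_combination -h1
  have hTb := aux_finite γ hγ b
  -- choose N beyond both finite sets
  obtain ⟨M, hM⟩ := (hSa.union hTb).bddAbove
  set N := M + 1 with hN
  have hbig : ∀ n, N ≤ n → a.coeff (-(n • γ)) = 0 ∧ b.coeff (-(n • γ)) = 0 := by
    intro n hn
    constructor
    · by_contra h
      exact absurd (hM (Set.mem_union_left _ h)) (by omega)
    · by_contra h
      exact absurd (hM (Set.mem_union_right _ h)) (by omega)
  -- partial sums identity
  have hkey : ∀ n : ℕ, b.coeff 0 =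
      (∑ i ∈ Finset.range n, a.coeff (-(i • γ)) * y ^ i) + b.coeff (-(n • γ)) * y ^ n := by
    intro n
    induction n with
    | zero => simp
    | succ n ih =>
      rw [ih, Finset.sum_range_succ]
      have := hrec (-(n • γ))
      have hsub : -(n • γ) - γ = -((n + 1) • γ) := by
        rw [succ_nsmul]; abel
      rw [hsub] at this
      rw [this]
      ring
  have hb0 : b.coeff 0 = ∑ i ∈ Finset.range N, a.coeff (-(i • γ)) * y ^ i := by
    rw [hkey N, (hbig N le_rfl).2, zero_mul, add_zero]
  have hfs : ∑ᶠ n : ℕ, a.coeff (-(n • γ)) * y ^ n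
      = ∑ i ∈ Finset.range N, a.coeff (-(i • γ)) * y ^ i := by
    apply finsum_eq_sum_of_support_subset
    intro n hn
    simp only [Function.mem_support] at hn
    simp only [Finset.coe_range, Set.mem_Iio]
    by_contra h
    push_neg at h
    rw [(hbig n h).1, zero_mul] at hn
    exact hn rfl
  rw [hfs, ← hb0]
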